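/- Let γ ∈ (1,5/3], θ = (γ-1)/2, K > 0 and M ≥ L ≥ 1 + K. Let x ∈ [0,1], ρ ≥ 0 and v ∈ ℝ satisfy v + ρ^θ/θ = M + Kx and v − ρ^θ/θ ≥ L − Kx, and let F ∈ ℝ with |F| ≤ K. Then F − K·(v + ρ^θ) ≤ 0; i.e., on the upper boundary w = M + Kx of the invariant region, the source term of the transport equation for w̃ = w − Kx is nonpositive. -/
import Mathlib


/-- On the upper boundary `w = M + Kx` of the invariant region,
the source term `F − K·λ₂` of the transport equation for `w̃ = w − Kx` is
nonpositive. -/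
theorem stmt_5 (γ θ K L M x ρ v F : ℝ) (hγ1 : 1 < γ) (hγ2 : γ ≤ 5 / 3)
    (hθ : θ = (γ - 1) / 2) (hK : 0 < K) (hLM : L ≤ M) (hL : 1 + K ≤ L)
    (hx : x ∈ Set.Icc (0 : ℝ) 1) (hρ : 0 ≤ ρ)
    (hw : v + ρ ^ θ / θ = M + K * x) (hz : L - K * x ≤ v - ρ ^ θ / θ)
    (hF : |F| ≤ K) :
    F - K * (v + ρ ^ θ) ≤ 0 := by
  have hv : 1 ≤ v := by nlinarith [hw, hz]
  have hρθ : 0 ≤ ρ ^ θ := Real.rpow_nonneg hρ θ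
  have hF' : F ≤ K := (abs_le.mp hF).2
  nlinarith
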